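/- Let H be Hermitian and let X be a subspace such that the compression A = P_X H P_X|_X has N-th and (N+1)-th eigenvalues λ̃_N < λ̃_{N+1}. If for some μ ∈ (λ̃_N, λ̃_{N+1}) the Schur complement S_μ = (C − μ) − B*(A − μ)⁻¹B is positive definite on X⊥, then H has exactly N eigenvalues (with multiplicity) strictly below μ; in particular the (N+1)-th eigenvalue λ_{N+1} of H satisfies λ_{N+1} ≥ μ. -/

import Mathlib

open Matrix
open scoped ComplexOrder

namespace SchurAux

set_option linter.unusedSectionVars false

variable {n : Type*} [Fintype n] [DecidableEq n]

/-- The real quadratic form of a matrix. -/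
noncomputable def qf (M : Matrix n n ℂ) (x : n → ℂ) : ℝ := (star x ⬝ᵥ M.mulVec x).re

@[simp] lemma qf_zero (M : Matrix n n ℂ) : qf M 0 = 0 := by simp [qf]

/-- Coordinate subspace supported on `s`. -/
noncomputable def coordSub (s : Finset n) : Submodule ℂ (n → ℂ) where
  carrier := {x | ∀ i ∉ s, x i = 0}
  add_mem' := fun hx hy i hi => by simp [hx i hi, hy i hi]
  zero_mem' := fun i _ => rfl
  smul_mem' := fun c x hx i hi => by simp [hx i hi]

lemma mem_coordSub {s : Finset n} {x : n → ℂ} : x ∈ coordSub s ↔ ∀ i ∉ s, x i = 0 := Iff.rfl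

noncomputable def coordRestrict (s : Finset n) : coordSub s →ₗ[ℂ] (s → ℂ) where
  toFun x i := (x : n → ℂ) i
  map_add' _ _ := rfl
  map_smul' _ _ := rfl

lemma coordRestrict_bij (s : Finset n) : Function.Bijective (coordRestrict s) := by
  constructor
  · intro x y hxy
    ext i
    by_cases hi : i ∈ s
    · exact congrFun hxy ⟨i, hi⟩
    · rw [x.2 i hi, y.2 i hi]
  · intro f
    refine ⟨⟨fun i => if h : i ∈ s then f ⟨i, h⟩ else 0, fun i hi => dif_neg hi⟩, ?_⟩
    ext i
    simp [coordRestrict, i.2]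

lemma finrank_coordSub (s : Finset n) : Module.finrank ℂ (coordSub s) = s.card := by
  rw [(LinearEquiv.ofBijective _ (coordRestrict_bij s)).finrank_eq]
  simp [Module.finrank_pi]

lemma diag_lower (d : n → ℝ) :
    ∀ x ∈ coordSub (Finset.univ.filter fun i => d i < 0), x ≠ 0 →
      ∑ i, d i * ‖x i‖ ^ 2 < 0 := by
  intro x hx hx0
  obtain ⟨j, hj⟩ : ∃ j, x j ≠ 0 := by
    by_contra h
    push_neg at h
    exact hx0 (funext h)
  have hjneg : d j < 0 := by
    by_contra h
    exact hj (hx j (by simp [h]))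
  have hle : ∀ i ∈ Finset.univ, d i * ‖x i‖ ^ 2 ≤ 0 := by
    intro i _
    by_cases hi : d i < 0
    · exact mul_nonpos_of_nonpos_of_nonneg hi.le (by positivity)
    · rw [hx i (by simp [hi])]
      simp
  rw [← Finset.add_sum_erase _ _ (Finset.mem_univ j)]
  have h1 : d j * ‖x j‖ ^ 2 < 0 :=
    mul_neg_of_neg_of_pos hjneg (pow_pos (norm_pos_iff.mpr hj) 2)
  have h2 : ∑ i ∈ Finset.univ.erase j, d i * ‖x i‖ ^ 2 ≤ 0 :=
    Finset.sum_nonpos fun i hi => hle i (Finset.mem_univ i)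
  linarith

lemma diag_upper (d : n → ℝ) (W : Submodule ℂ (n → ℂ))
    (h : ∀ x ∈ W, x ≠ 0 → ∑ i, d i * ‖x i‖ ^ 2 < 0) :
    Module.finrank ℂ W ≤ (Finset.univ.filter fun i => d i < 0).card := by
  classical
  set s : Finset n := Finset.univ.filter (fun i => ¬ d i < 0) with hs
  have hV : ∀ x ∈ coordSub s, 0 ≤ ∑ i, d i * ‖x i‖ ^ 2 := by
    intro x hx
    apply Finset.sum_nonneg
    intro i _
    by_cases hi : d i < 0
    · rw [hx i (by simp [hs, hi])]
      simp
    · push_neg at hi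
      positivity
  have hdisj : W ⊓ coordSub s = ⊥ := by
    rw [Submodule.eq_bot_iff]
    rintro x ⟨hxW, hxV⟩
    by_contra hx0
    exact absurd (hV x hxV) (not_le.mpr (h x hxW hx0))
  have hadd := Submodule.finrank_sup_add_finrank_inf_eq W (coordSub s)
  rw [hdisj, finrank_bot, add_zero] at hadd
  have hle : Module.finrank ℂ (W ⊔ coordSub s : Submodule ℂ (n → ℂ)) ≤ Fintype.card n := by
    simpa [Module.finrank_pi] using Submodule.finrank_le (W ⊔ coordSub s)
  have hcards : (Finset.univ.filter fun i => d i < 0).card + s.card = Fintype.card n := by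
    rw [hs]
    simpa using Finset.card_filter_add_card_filter_not
      (s := (Finset.univ : Finset n)) (p := fun i => d i < 0)
  have := finrank_coordSub (n := n) s
  omega

section Hermitian

variable {M : Matrix n n ℂ}

lemma shift_spectral (hM : M.IsHermitian) (μ : ℝ) :
    M - (μ : ℂ) • 1 =
      (hM.eigenvectorUnitary : Matrix n n ℂ) *
        diagonal (fun i => (hM.eigenvalues i : ℂ) - μ) *
        star (hM.eigenvectorUnitary : Matrix n n ℂ) := by
  set U := (hM.eigenvectorUnitary : Matrix n n ℂ) with hU
  have hUU : U * star U = 1 := Matrix.mem_unitaryGroup_iff.mp hM.eigenvectorUnitary.2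
  have h1 : diagonal (fun i => (hM.eigenvalues i : ℂ) - μ)
      = diagonal (Complex.ofReal ∘ hM.eigenvalues) - (μ : ℂ) • 1 := by
    rw [smul_one_eq_diagonal, ← diagonal_sub]
    rfl
  rw [h1, Matrix.mul_sub, Matrix.sub_mul]
  congr 1
  · exact hM.spectral_theorem
  · rw [mul_smul_comm, Matrix.mul_one, smul_mul_assoc, hUU]

lemma qf_shift (hM : M.IsHermitian) (μ : ℝ) (x : n → ℂ) :
    qf (M - (μ : ℂ) • 1) x =
      ∑ i, (hM.eigenvalues i - μ) *
        ‖(star (hM.eigenvectorUnitary : Matrix n n ℂ) *ᵥ x) i‖ ^ 2 := by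
  set U := (hM.eigenvectorUnitary : Matrix n n ℂ) with hU
  set y := star U *ᵥ x with hy
  have hstar : star x ᵥ* U = star y := by
    rw [hy, star_mulVec, star_eq_conjTranspose, conjTranspose_conjTranspose]
  rw [qf, shift_spectral hM μ, ← hU, ← mulVec_mulVec, ← mulVec_mulVec,
    dotProduct_mulVec, hstar, ← hy]
  have : ∀ i, star (y i) * ((diagonal (fun i => (hM.eigenvalues i : ℂ) - μ)) *ᵥ y) i
      = ((hM.eigenvalues i - μ) * ‖y i‖ ^ 2 : ℝ) := by
    intro i
    rw [mulVec_diagonal, mul_left_comm, Complex.star_def, mul_comm (starRingEnd ℂ (y i)),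
      Complex.mul_conj, Complex.normSq_eq_norm_sq]
    push_cast
    ring
  rw [dotProduct]
  simp only [Pi.star_apply, this, ← Complex.ofReal_sum, Complex.ofReal_re]

/-- An invertible matrix as a linear equivalence on tuples. -/
lemma herm_upper (hM : M.IsHermitian) (μ : ℝ) (W : Submodule ℂ (n → ℂ))
    (h : ∀ x ∈ W, x ≠ 0 → qf (M - (μ : ℂ) • 1) x < 0) :
    Module.finrank ℂ W ≤ (Finset.univ.filter fun i => hM.eigenvalues i < μ).card := by
  set U := (hM.eigenvectorUnitary : Matrix n n ℂ) with hU
  haveI hinv : Invertible (star U) :=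
    ⟨U, Matrix.mem_unitaryGroup_iff.mp hM.eigenvectorUnitary.2,
      Matrix.mem_unitaryGroup_iff'.mp hM.eigenvectorUnitary.2⟩
  set T := Matrix.toLinearEquiv' (star U) hinv with hT
  have hTa : ∀ x : n → ℂ, T x = star U *ᵥ x := fun x => Matrix.toLin'_apply _ x
  have key := diag_upper (fun i => hM.eigenvalues i - μ) (W.map (T : (n → ℂ) →ₗ[ℂ] (n → ℂ))) ?_
  · rw [LinearEquiv.finrank_map_eq] at key
    convert key using 2
    ext i
    simp [sub_neg]
  · rintro y ⟨x, hxW, rfl⟩ hy0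
    have hx0 : x ≠ 0 := by
      rintro rfl
      simp at hy0
    have := h x hxW hx0
    rw [qf_shift hM μ x] at this
    simpa [hTa] using this

lemma herm_lower (hM : M.IsHermitian) (μ : ℝ) :
    ∃ W : Submodule ℂ (n → ℂ),
      Module.finrank ℂ W = (Finset.univ.filter fun i => hM.eigenvalues i < μ).card ∧
      ∀ x ∈ W, x ≠ 0 → qf (M - (μ : ℂ) • 1) x < 0 := by
  set U := (hM.eigenvectorUnitary : Matrix n n ℂ) with hU
  haveI hinv : Invertible (star U) :=
    ⟨U, Matrix.mem_unitaryGroup_iff.mp hM.eigenvectorUnitary.2,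
      Matrix.mem_unitaryGroup_iff'.mp hM.eigenvectorUnitary.2⟩
  set T := Matrix.toLinearEquiv' (star U) hinv with hT
  have hTa : ∀ x : n → ℂ, T x = star U *ᵥ x := fun x => Matrix.toLin'_apply _ x
  set s : Finset n := Finset.univ.filter fun i => hM.eigenvalues i - μ < 0 with hs
  refine ⟨(coordSub s).map (T.symm : (n → ℂ) →ₗ[ℂ] (n → ℂ)), ?_, ?_⟩
  · rw [LinearEquiv.finrank_map_eq, finrank_coordSub]
    congr 1
    ext i
    simp [hs, sub_neg]
  · rintro x ⟨z, hz, rfl⟩ hx0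
    have hz0 : z ≠ 0 := by
      rintro rfl
      simp at hx0
    have hTz : T (T.symm z) = z := T.apply_symm_apply z
    rw [qf_shift hM μ]
    have := diag_lower (fun i => hM.eigenvalues i - μ) z hz hz0
    rw [← hTz, hTa] at this
    exact this

end Hermitian

lemma qf_congr (L M : Matrix n n ℂ) (x : n → ℂ) :
    qf (L * M * Lᴴ) x = qf M (Lᴴ *ᵥ x) := by
  simp only [qf, ← mulVec_mulVec, dotProduct_mulVec, star_mulVec, conjTranspose_conjTranspose]

lemma qf_fromBlocks {p q : Type*} [Fintype p] [Fintype q] [DecidableEq p] [DecidableEq q]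
    (A₁ : Matrix p p ℂ) (S : Matrix q q ℂ) (x : p ⊕ q → ℂ) :
    qf (fromBlocks A₁ 0 0 S) x = qf A₁ (x ∘ Sum.inl) + qf S (x ∘ Sum.inr) := by
  have hx : x = Sum.elim (x ∘ Sum.inl) (x ∘ Sum.inr) := (Sum.elim_comp_inl_inr x).symm
  rw [qf, hx, fromBlocks_mulVec]
  have hstar : star (Sum.elim (x ∘ Sum.inl) (x ∘ Sum.inr))
      = Sum.elim (star (x ∘ Sum.inl)) (star (x ∘ Sum.inr)) := by
    funext i
    cases i <;> rfl
  rw [hstar]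
  simp only [zero_mulVec, add_zero, zero_add, sumElim_dotProduct_sumElim]
  simp [qf]

/-- extension by zero into a sum type -/
def extLeft (p q : Type*) : (p → ℂ) →ₗ[ℂ] (p ⊕ q → ℂ) where
  toFun a := Sum.elim a 0
  map_add' a b := by funext i; cases i <;> simp
  map_smul' c a := by funext i; cases i <;> simp

end SchurAux

open SchurAux

theorem eigenvalue_lower_bound_schur (p k : ℕ)
    (A : Matrix (Fin p) (Fin p) ℂ) (B : Matrix (Fin p) (Fin k) ℂ)
    (C : Matrix (Fin k) (Fin k) ℂ) (hA : A.IsHermitian)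
    (hH : (Matrix.fromBlocks A B Bᴴ C).IsHermitian)
    (N : ℕ) (μ : ℝ)
    (hcount : (Finset.univ.filter fun i => hA.eigenvalues i < μ).card = N)
    (hnoteig : ∀ i, hA.eigenvalues i ≠ μ)
    (hS : ((C - (μ : ℂ) • (1 : Matrix (Fin k) (Fin k) ℂ)) -
        Bᴴ * (A - (μ : ℂ) • (1 : Matrix (Fin p) (Fin p) ℂ))⁻¹ * B).PosDef) :
    (Finset.univ.filter fun i => hH.eigenvalues i < μ).card = N ∧
      ∀ lam : Fin (p + k) → ℝ, Monotone lam →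
        (∃ σ : Equiv.Perm (Fin p ⊕ Fin k),
          lam = hH.eigenvalues ∘ ⇑σ ∘ ⇑(finSumFinEquiv : Fin p ⊕ Fin k ≃ Fin (p + k)).symm) →
        ∀ j : Fin (p + k), N ≤ (j : ℕ) → μ ≤ lam j := by
  classical
  set A' : Matrix (Fin p) (Fin p) ℂ := A - (μ : ℂ) • 1 with hA'def
  set S : Matrix (Fin k) (Fin k) ℂ :=
    (C - (μ : ℂ) • 1) - Bᴴ * A'⁻¹ * B with hSdef
  set H : Matrix (Fin p ⊕ Fin k) (Fin p ⊕ Fin k) ℂ := fromBlocks A B Bᴴ C with hHdef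
  -- A' is Hermitian
  have hA'herm : A'ᴴ = A' := by
    rw [hA'def]
    simp [conjTranspose_sub, conjTranspose_smul, hA.eq, Complex.star_def, Complex.conj_ofReal]
  -- A' is invertible
  have hdet : A'.det = ∏ i, ((hA.eigenvalues i : ℂ) - μ) := by
    rw [hA'def, shift_spectral hA μ, det_mul, det_mul, det_diagonal]
    have h1 : ((hA.eigenvectorUnitary : Matrix (Fin p) (Fin p) ℂ)).det *
        (star (hA.eigenvectorUnitary : Matrix (Fin p) (Fin p) ℂ)).det = 1 := by
      rw [← det_mul, Matrix.mem_unitaryGroup_iff.mp hA.eigenvectorUnitary.2, det_one]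
    calc ((hA.eigenvectorUnitary : Matrix (Fin p) (Fin p) ℂ)).det *
          (∏ i, ((hA.eigenvalues i : ℂ) - μ)) *
          (star (hA.eigenvectorUnitary : Matrix (Fin p) (Fin p) ℂ)).det
        = ((hA.eigenvectorUnitary : Matrix (Fin p) (Fin p) ℂ)).det *
          (star (hA.eigenvectorUnitary : Matrix (Fin p) (Fin p) ℂ)).det *
          (∏ i, ((hA.eigenvalues i : ℂ) - μ)) := by ring
      _ = ∏ i, ((hA.eigenvalues i : ℂ) - μ) := by rw [h1, one_mul]
  have hdet0 : IsUnit A'.det := by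
    rw [hdet, isUnit_iff_ne_zero]
    rw [Finset.prod_ne_zero_iff]
    intro i _
    rw [sub_ne_zero]
    exact fun h => hnoteig i (by exact_mod_cast h)
  haveI hA'inv : Invertible A' := A'.invertibleOfIsUnitDet hdet0
  -- the congruence matrix
  set L : Matrix (Fin p ⊕ Fin k) (Fin p ⊕ Fin k) ℂ :=
    fromBlocks 1 0 (Bᴴ * A'⁻¹) 1 with hLdef
  set G : Matrix (Fin p ⊕ Fin k) (Fin p ⊕ Fin k) ℂ := fromBlocks A' 0 0 S with hGdef
  have hLH : Lᴴ = fromBlocks 1 (A'⁻¹ * B) 0 1 := by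
    rw [hLdef, fromBlocks_conjTranspose, conjTranspose_mul, conjTranspose_conjTranspose,
      conjTranspose_nonsing_inv, hA'herm]
    simp
  -- the LDL decomposition
  have hdec : H - (μ : ℂ) • 1 = L * G * Lᴴ := by
    have hsplit : H - (μ : ℂ) • 1 = fromBlocks A' B Bᴴ (C - (μ : ℂ) • 1) := by
      rw [hHdef, ← fromBlocks_one, fromBlocks_smul, sub_eq_add_neg, fromBlocks_neg,
        fromBlocks_add]
      simp [hA'def, sub_eq_add_neg]
    rw [hsplit, fromBlocks_eq_of_invertible₁₁ A' B Bᴴ (C - (μ : ℂ) • 1), hLH]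
    rw [invOf_eq_nonsing_inv]
  -- quadratic form facts
  have hqS : ∀ y : Fin k → ℂ, 0 ≤ qf S y := by
    intro y
    by_cases hy : y = 0
    · simp [hy]
    · have := hS.dotProduct_mulVec_pos hy
      rw [Complex.lt_def] at this
      exact le_of_lt this.1
  have hqcongr : ∀ x, qf (H - (μ : ℂ) • 1) x = qf G (Lᴴ *ᵥ x) := by
    intro x
    rw [hdec, qf_congr]
  -- linear equivalence from Lᴴ
  haveI hLinv : Invertible L := by
    apply L.invertibleOfIsUnitDet
    rw [hLdef, det_fromBlocks_zero₁₂, det_one, det_one, one_mul]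
    exact isUnit_one
  haveI hLHinv : Invertible Lᴴ := by
    apply Lᴴ.invertibleOfIsUnitDet
    rw [det_conjTranspose]
    apply IsUnit.star
    rw [hLdef, det_fromBlocks_zero₁₂, det_one, det_one, one_mul]
    exact isUnit_one
  set E := Matrix.toLinearEquiv' Lᴴ hLHinv with hEdef
  have hEa : ∀ x, E x = Lᴴ *ᵥ x := fun x => Matrix.toLin'_apply _ x
  -- upper bound for subspaces negative on G
  have block_upper : ∀ W : Submodule ℂ ((Fin p ⊕ Fin k) → ℂ),
      (∀ x ∈ W, x ≠ 0 → qf G x < 0) → Module.finrank ℂ W ≤ N := by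
    intro W hW
    set π : ((Fin p ⊕ Fin k) → ℂ) →ₗ[ℂ] (Fin p → ℂ) := LinearMap.funLeft ℂ ℂ Sum.inl with hπ
    have hπa : ∀ x, π x = x ∘ Sum.inl := fun _ => rfl
    have hker : ∀ x ∈ W, π x = 0 → x = 0 := by
      intro x hxW hx0
      by_contra hne
      have h1 := hW x hxW hne
      rw [hGdef, qf_fromBlocks] at h1
      have h2 : x ∘ Sum.inl = 0 := hx0
      rw [h2, qf_zero] at h1
      have := hqS (x ∘ Sum.inr)
      linarith
    have hinj : Function.Injective (π.comp W.subtype) := by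
      intro a b hab
      have h1 : π ((a : (Fin p ⊕ Fin k) → ℂ) - b) = 0 := by
        rw [map_sub]
        rw [LinearMap.comp_apply] at hab
        rw [LinearMap.comp_apply] at hab
        simp only [Submodule.subtype_apply] at hab
        rw [sub_eq_zero]
        exact hab
      have := hker _ (sub_mem a.2 b.2) h1
      exact Subtype.ext (sub_eq_zero.mp this)
    have hr : Module.finrank ℂ (LinearMap.range (π.comp W.subtype)) = Module.finrank ℂ W :=
      LinearMap.finrank_range_of_inj hinj
    have hrange : LinearMap.range (π.comp W.subtype) = W.map π := by
      rw [LinearMap.range_comp, Submodule.range_subtype]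
    have hneg : ∀ a ∈ W.map π, a ≠ 0 → qf (A - (μ : ℂ) • 1) a < 0 := by
      rintro a ⟨x, hxW, rfl⟩ ha
      have hxne : x ≠ 0 := by
        rintro rfl
        exact ha (map_zero π)
      have h1 := hW x hxW hxne
      rw [hGdef, qf_fromBlocks] at h1
      have h2 := hqS (x ∘ Sum.inr)
      rw [hπa, ← hA'def]
      linarith
    calc Module.finrank ℂ W = Module.finrank ℂ (W.map π) := by rw [← hr, hrange]
      _ ≤ (Finset.univ.filter fun i => hA.eigenvalues i < μ).card :=
          herm_upper hA μ (W.map π) hneg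
      _ = N := hcount
  -- a subspace of dimension N negative on G
  obtain ⟨W_A, hWA_rank, hWA_neg⟩ := herm_lower hA μ
  have block_lower : ∃ W : Submodule ℂ ((Fin p ⊕ Fin k) → ℂ),
      Module.finrank ℂ W = N ∧ ∀ x ∈ W, x ≠ 0 → qf G x < 0 := by
    set ι := extLeft (Fin p) (Fin k) with hι
    have hιinj : Function.Injective ι := by
      intro a b hab
      funext i
      exact congrFun hab (Sum.inl i)
    refine ⟨W_A.map ι, ?_, ?_⟩
    · have hinj2 : Function.Injective (ι.comp W_A.subtype) :=
        hιinj.comp W_A.injective_subtype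
      have hr : Module.finrank ℂ (LinearMap.range (ι.comp W_A.subtype)) =
          Module.finrank ℂ W_A := LinearMap.finrank_range_of_inj hinj2
      have hrange : LinearMap.range (ι.comp W_A.subtype) = W_A.map ι := by
        rw [LinearMap.range_comp, Submodule.range_subtype]
      rw [← hrange, hr, hWA_rank, hcount]
    · rintro x ⟨a, haW, rfl⟩ hx0
      have ha0 : a ≠ 0 := by
        rintro rfl
        exact hx0 (map_zero ι)
      have h1 : (ι a) ∘ Sum.inl = a := rfl
      have h2 : (ι a) ∘ Sum.inr = 0 := rfl
      rw [hGdef, qf_fromBlocks, h1, h2, qf_zero, add_zero, hA'def]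
      exact hWA_neg a haW ha0
  -- first conjunct
  have hfirst : (Finset.univ.filter fun i => hH.eigenvalues i < μ).card = N := by
    apply le_antisymm
    · obtain ⟨W_H, hWH_rank, hWH_neg⟩ := herm_lower hH μ
      rw [← hWH_rank]
      have : ∀ y ∈ W_H.map (E : _ →ₗ[ℂ] _), y ≠ 0 → qf G y < 0 := by
        rintro y ⟨x, hxW, rfl⟩ hy0
        have hx0 : x ≠ 0 := by
          rintro rfl
          exact hy0 (map_zero _)
        have hq := hWH_neg x hxW hx0
        rw [hqcongr x] at hq
        simpa only [LinearEquiv.coe_coe, hEa] using hq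
      have hfin := block_upper _ this
      rwa [LinearEquiv.finrank_map_eq] at hfin
    · obtain ⟨W₁, hW₁_rank, hW₁_neg⟩ := block_lower
      have : ∀ x ∈ W₁.map (E.symm : _ →ₗ[ℂ] _), x ≠ 0 →
          qf (H - (μ : ℂ) • 1) x < 0 := by
        rintro x ⟨z, hz, rfl⟩ hx0
        have hz0 : z ≠ 0 := by
          rintro rfl
          exact hx0 (map_zero _)
        have hz' : Lᴴ *ᵥ ((E.symm : (Fin p ⊕ Fin k → ℂ) →ₗ[ℂ] _) z) = z := by
          rw [← hEa]
          simp
        rw [hqcongr, hz']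
        exact hW₁_neg z hz hz0
      have h2 := herm_upper hH μ (W₁.map (E.symm : _ →ₗ[ℂ] _)) this
      rwa [LinearEquiv.finrank_map_eq, hW₁_rank] at h2
  refine ⟨hfirst, ?_⟩
  -- second conjunct
  rintro lam hmono ⟨σ, hlam⟩ j hj
  by_contra hlt
  push_neg at hlt
  set g : Fin (p + k) ≃ (Fin p ⊕ Fin k) :=
    (finSumFinEquiv : Fin p ⊕ Fin k ≃ Fin (p + k)).symm.trans σ with hg
  have hcard2 : (Finset.univ.filter fun j' : Fin (p + k) =>
      hH.eigenvalues (g j') < μ).card = N := by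
    rw [← hfirst]
    apply Finset.card_equiv g
    intro i
    simp
  have hsub : Finset.Iic j ⊆ Finset.univ.filter fun j' : Fin (p + k) =>
      hH.eigenvalues (g j') < μ := by
    intro j' hj'
    rw [Finset.mem_Iic] at hj'
    rw [Finset.mem_filter]
    refine ⟨Finset.mem_univ _, ?_⟩
    have hmon : lam j' ≤ lam j := hmono hj'
    have hval : lam j' = hH.eigenvalues (g j') := by rw [hlam]; rfl
    rw [← hval]
    calc lam j' ≤ lam j := hmon
      _ < μ := hlt
  have hcard3 := Finset.card_le_card hsub
  rw [hcard2, Fin.card_Iic] at hcard3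
  omega
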